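/- Let D = (D_X,D_Y,D_Z) ∈ ℝ³ have entries all of the same sign, let t = (t_X,t_Y,t_Z) ∈ ℝ³, and let N' be the single-qubit normal-form map with parameters (D,t). Suppose N' maps every density matrix (positive semidefinite 2×2 matrix of trace 1) to a density matrix. Then Υ(D,t) ≤ 1. If moreover 0 < max(D_X²,D_Y²,D_Z²) < 1 or 0 < t_X²+t_Y²+t_Z² < 1, then Υ(D,t) < 1. -/

import Mathlib

open scoped Kronecker
open Matrix
open scoped ComplexOrder

noncomputable section

abbrev QMat := Matrix (Fin 2) (Fin 2) ℂ

abbrev NMat (n : ℕ) := Matrix (Fin n → Fin 2) (Fin n → Fin 2) ℂ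

/-- The four single-qubit Pauli matrices `I, X, Y, Z`. -/
def pauli : Fin 4 → QMat :=
  ![1, !![0, 1; 1, 0], !![0, -Complex.I; Complex.I, 0], !![1, 0; 0, -1]]

/-- The non-identity Paulis `X, Y, Z`. -/
def pauliXYZ (i : Fin 3) : QMat := pauli i.succ

/-- The `n`-qubit Pauli string indexed by `s : Fin n → Fin 4`. -/
def pauliString {n : ℕ} (s : Fin n → Fin 4) : NMat n :=
  Matrix.of fun i j => ∏ k, pauli (s k) (i k) (j k)

/-- Support of a Pauli string. -/
def psupp {n : ℕ} (s : Fin n → Fin 4) : Finset (Fin n) :=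
  Finset.univ.filter fun k => s k ≠ 0

/-- The observable with real Pauli coefficients `a`. -/
def obsOf {n : ℕ} (a : (Fin n → Fin 4) → ℝ) : NMat n :=
  ∑ s : Fin n → Fin 4, (a s : ℂ) • pauliString s

/-- Normalized Frobenius norm squared, `‖M‖_F² = Tr[Mᴴ M]/dim`. -/
def frobSq {m : Type*} [Fintype m] (M : Matrix m m ℂ) : ℝ :=
  (Matrix.trace (Mᴴ * M)).re / (Fintype.card m : ℝ)

def IsUnitary {m : Type*} [Fintype m] [DecidableEq m] (U : Matrix m m ℂ) : Prop :=
  U * Uᴴ = 1 ∧ Uᴴ * U = 1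

/-- Hilbert–Schmidt adjoint of a (linear) map on matrices:
`Φ†(A) i j = conj (Tr[Aᴴ Φ(E_{ij})])`. -/
def hsAdj {m : Type*} [Fintype m] [DecidableEq m]
    (Φ : Matrix m m ℂ → Matrix m m ℂ) (A : Matrix m m ℂ) : Matrix m m ℂ :=
  Matrix.of fun i j => (starRingEnd ℂ) (Matrix.trace (Aᴴ * Φ (Matrix.single i j 1)))

/-- Pauli transfer matrix entry of a single-qubit map. -/
def ptm (Φ : QMat → QMat) (a b : Fin 4) : ℂ :=
  Matrix.trace (pauli a * Φ (pauli b)) / 2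

/-- Tensor product `Φ 0 ⊗ Φ 1 ⊗ ⋯ ⊗ Φ (n-1)` of single-qubit (linear) maps,
defined via the Pauli transfer matrices. -/
def tensorMap {n : ℕ} (Φ : Fin n → QMat → QMat) (M : NMat n) : NMat n :=
  ∑ s : Fin n → Fin 4, ∑ t : Fin n → Fin 4,
    ((∏ k, ptm (Φ k) (s k) (t k)) * (Matrix.trace (pauliString t * M) / ((2 : ℂ) ^ n))) •
      pauliString s

/-- `n`-fold tensor power `Φ^{⊗n}` of a single-qubit (linear) map. -/
def tensorPow (n : ℕ) (Φ : QMat → QMat) : NMat n → NMat n :=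
  tensorMap fun _ => Φ

/-- Tensor product of `n` single-qubit matrices. -/
def qprod {n : ℕ} (V : Fin n → QMat) : NMat n :=
  Matrix.of fun i j => ∏ k, V k (i k) (j k)

/-- The single-qubit normal-form map `N'` with parameters `(D, t)`:
`N'(I) = I + Σ t_i σ_i` and `N'(σ_i) = D_i σ_i`. -/
def normalForm (D t : Fin 3 → ℝ) (M : QMat) : QMat :=
  (Matrix.trace M / 2) • (1 + ∑ i, (t i : ℂ) • pauliXYZ i) +
    ∑ i, ((D i : ℂ) * (Matrix.trace (pauliXYZ i * M) / 2)) • pauliXYZ i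

/-- `Υ(D,t) = max_{‖a‖₂=1} Σ_i a_i² D_i² + (Σ_i a_i t_i)²`. -/
def Upsilon (D t : Fin 3 → ℝ) : ℝ :=
  sSup { r : ℝ | ∃ a : Fin 3 → ℝ, (∑ i, a i ^ 2) = 1 ∧
    r = (∑ i, a i ^ 2 * D i ^ 2) + (∑ i, a i * t i) ^ 2 }

/-- Choi matrix of a single-qubit map. -/
def choi (Φ : QMat → QMat) : Matrix (Fin 2 × Fin 2) (Fin 2 × Fin 2) ℂ :=
  Matrix.of fun p q => Φ (Matrix.single p.1 q.1 1) p.2 q.2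

/-- A single-qubit quantum channel: linear, trace preserving, completely positive. -/
structure IsChannel (Φ : QMat → QMat) : Prop where
  linear : IsLinearMap ℂ Φ
  tracePreserving : ∀ M, Matrix.trace (Φ M) = Matrix.trace M
  completelyPositive : (choi Φ).PosSemidef

/-- Unitary 1-design (finitely supported distribution). -/
def IsOneDesign {ι : Type*} [Fintype ι] (w : ι → ℝ) (W : ι → QMat) : Prop :=
  ∀ M : QMat, ∑ i, (w i : ℂ) • (W i * M * (W i)ᴴ) = (Matrix.trace M / 2) • (1 : QMat)

/-- The swap (flip) operator on two qubits. -/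
def swapOp : Matrix (Fin 2 × Fin 2) (Fin 2 × Fin 2) ℂ :=
  Matrix.of fun p q => if p.1 = q.2 ∧ p.2 = q.1 then 1 else 0

/-- Unitary 2-design: the twirl of any `M` matches the Haar value
`c_I • 1 + c_F • F` (closed form of the Haar average on `U(2)`). -/
def IsTwoDesign {ι : Type*} [Fintype ι] (w : ι → ℝ) (W : ι → QMat) : Prop :=
  ∀ M : Matrix (Fin 2 × Fin 2) (Fin 2 × Fin 2) ℂ,
    ∑ i, (w i : ℂ) • ((W i ⊗ₖ W i) * M * (W i ⊗ₖ W i)ᴴ) =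
      ((Matrix.trace M - Matrix.trace (swapOp * M) / 2) / 3) •
          (1 : Matrix (Fin 2 × Fin 2) (Fin 2 × Fin 2) ℂ) +
        ((Matrix.trace (swapOp * M) - Matrix.trace M / 2) / 3) • swapOp

/-- `η`-approximate scrambler (finitely supported distribution over `U(2)`). -/
def IsApproxScrambler {ι : Type*} [Fintype ι] (η : ℝ) (w : ι → ℝ) (U : ι → QMat) : Prop :=
  (∀ a b : Fin 4, a ≠ b →
      ∑ i, (w i : ℂ) • (((U i)ᴴ * pauli a * U i) ⊗ₖ ((U i)ᴴ * pauli b * U i)) = 0) ∧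
    ∀ a b : Fin 3,
      ∑ i, w i * ((Matrix.trace (pauliXYZ a * U i * pauliXYZ b * (U i)ᴴ)).re / 2) ^ 2 ≤
        (1 + 2 * η) / 3

/-- Locally unbiased distribution over linear maps on `n`-qubit matrices. -/
def LocallyUnbiased (n : ℕ) {ι : Type*} [Fintype ι] (w : ι → ℝ)
    (C : ι → NMat n → NMat n) : Prop :=
  ∃ (m : ℕ) (v : Fin n → Fin m → ℝ) (W : Fin n → Fin m → QMat),
    (∀ j k, 0 ≤ v j k) ∧ (∀ j, ∑ k, v j k = 1) ∧ (∀ j k, IsUnitary (W j k)) ∧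
      (∀ j, IsOneDesign (v j) (W j)) ∧
      ∀ A B : NMat n,
        ∑ i, (w i : ℂ) • (C i A ⊗ₖ C i B) =
          ∑ i, ∑ f : Fin n → Fin m,
            ((w i * ∏ j, v j (f j) : ℝ) : ℂ) •
              (C i (qprod (fun j => W j (f j)) * A * (qprod fun j => W j (f j))ᴴ) ⊗ₖ
                C i (qprod (fun j => W j (f j)) * B * (qprod fun j => W j (f j))ᴴ))

/-- Pauli-invariant distribution over linear maps on `n`-qubit matrices. -/
def PauliInvariant (n : ℕ) {ι : Type*} [Fintype ι] (w : ι → ℝ)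
    (C : ι → NMat n → NMat n) : Prop :=
  ∀ A B : NMat n,
    ∑ i, (w i : ℂ) • (C i A ⊗ₖ C i B) =
      ((4 : ℂ) ^ n)⁻¹ • ∑ r : Fin n → Fin 4, ∑ i, (w i : ℂ) •
        (C i (pauliString r * A * pauliString r) ⊗ₖ C i (pauliString r * B * pauliString r))

/-- Fourier coefficient `Φ_γ(C) = Π_j 2^{-n} Tr[P_j C_j(P_{j-1})]` of a Pauli path. -/
def pathCoeff {n L : ℕ} (Cs : Fin L → NMat n → NMat n)
    (γ : Fin (L + 1) → Fin n → Fin 4) : ℂ :=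
  ∏ j : Fin L,
    (Matrix.trace (pauliString (γ j.succ) * Cs j (pauliString (γ j.castSucc))) / ((2 : ℂ) ^ n))

/-- Path weight `|γ| = Σ_{j=1}^L |P_j|`. -/
def pathWeight {n L : ℕ} (γ : Fin (L + 1) → Fin n → Fin 4) : ℕ :=
  ∑ j : Fin L, (psupp (γ j.succ)).card

/-- The (non-physical) map `Ñ_p` with `Ñ_p(I) = (N(I) - pI)/(1-p)` and
`Ñ_p(σ) = N(σ)/(1-p)` for `σ ∈ {X,Y,Z}`. -/
def tildeMap (N : QMat → QMat) (p : ℝ) (M : QMat) : QMat :=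
  (Matrix.trace M / 2) • (((1 : ℂ) - (p : ℂ))⁻¹ • (N 1 - (p : ℂ) • (1 : QMat))) +
    ∑ i : Fin 3, (Matrix.trace (pauliXYZ i * M) / 2) • (((1 : ℂ) - (p : ℂ))⁻¹ • N (pauliXYZ i))

/-- The layers of an `L`-layered noisy circuit: `C_j(ρ) = N^{⊗n}(U_j ρ U_j†)` for `j < L`,
and the last layer is followed by the single-qubit layer `V`. -/
def layerMaps {n L : ℕ} (Nm : QMat → QMat) (U : Fin L → NMat n) (Vt : NMat n)
    (j : Fin L) (ρ : NMat n) : NMat n :=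
  if j.val = L - 1 then Vt * tensorPow n Nm (U j * ρ * (U j)ᴴ) * Vtᴴ
  else tensorPow n Nm (U j * ρ * (U j)ᴴ)

/-- Composition `C_L ∘ ⋯ ∘ C_1` of the layers. -/
def circuitOf {n L : ℕ} (lm : Fin L → NMat n → NMat n) (ρ : NMat n) : NMat n :=
  (List.finRange L).foldl (fun σ j => lm j σ) ρ

/-- Operator (spectral) norm of a matrix, as the `ℓ²→ℓ²` operator norm. -/
def specNorm {m : Type*} [Fintype m] (M : Matrix m m ℂ) : ℝ :=
  Real.sqrt (sSup { r : ℝ | ∃ v : m → ℂ,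
    (∑ x, Complex.normSq (v x)) = 1 ∧ r = ∑ x, Complex.normSq (M.mulVec v x) })

/-- Trace norm `‖M‖₁ = Tr √(Mᴴ M)` (sum of singular values). -/
def traceNorm {m : Type*} [Fintype m] [DecidableEq m] (M : Matrix m m ℂ) : ℝ :=
  (Matrix.trace (((Matrix.posSemidef_conjTranspose_mul_self M).isHermitian.eigenvectorUnitary :
      Matrix m m ℂ) * Matrix.diagonal ((fun x : ℝ => (x : ℂ)) ∘ Real.sqrt ∘
        (Matrix.posSemidef_conjTranspose_mul_self M).isHermitian.eigenvalues) *
      (star (Matrix.posSemidef_conjTranspose_mul_self M).isHermitian.eigenvectorUnitary :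
        Matrix m m ℂ))).re


private lemma psd_det_nonneg' {n : Type*} [Fintype n] [DecidableEq n] {M : Matrix n n ℂ}
    (h : M.PosSemidef) : 0 ≤ M.det := by
  rw [h.1.det_eq_prod_eigenvalues]
  exact Finset.prod_nonneg fun i _ => RCLike.ofReal_nonneg.mpr (h.eigenvalues_nonneg i)

private lemma keyA' (D t : Fin 3 → ℝ)
    (hchan : ∀ ρ : QMat, ρ.PosSemidef → Matrix.trace ρ = 1 →
      (normalForm D t ρ).PosSemidef ∧ Matrix.trace (normalForm D t ρ) = 1)
    (a : Fin 3 → ℝ) (ha : (∑ i, a i ^ 2) = 1) :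
    (∑ i, (D i * a i + t i) ^ 2) ≤ 1 := by
  rw [Fin.sum_univ_three] at ha
  have hC : ((a 0 : ℂ)) ^ 2 + ((a 1 : ℂ)) ^ 2 + ((a 2 : ℂ)) ^ 2 = 1 := by
    exact_mod_cast congrArg (Complex.ofReal) ha
  set x : ℂ := (a 0 : ℂ) with hx
  set y : ℂ := (a 1 : ℂ) with hy
  set z : ℂ := (a 2 : ℂ) with hz
  set ρ : QMat := !![(1 + z)/2, (x - y * Complex.I)/2;
    (x + y * Complex.I)/2, (1 - z)/2] with hρ
  have htr : Matrix.trace ρ = 1 := by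
    simp [hρ, Matrix.trace_fin_two]; ring
  have hherm : ρᴴ = ρ := by
    ext i j
    fin_cases i <;> fin_cases j <;>
      simp [hρ, Matrix.conjTranspose_apply, map_div₀, Complex.conj_ofReal, hx, hy, hz] <;> ring
  have hidem : ρ * ρ = ρ := by
    ext i j
    fin_cases i <;> fin_cases j <;>
      simp [hρ, Matrix.mul_apply, Fin.sum_univ_two] <;> ring_nf <;>
      rw [Complex.I_sq] <;> linear_combination hC / 4
  have hpsd : ρ.PosSemidef := by
    have h := Matrix.posSemidef_conjTranspose_mul_self ρ
    rwa [hherm, hidem] at h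
  obtain ⟨hN, -⟩ := hchan ρ hpsd htr
  have hNmat : normalForm D t ρ = !![(1 + ((D 2 * a 2 + t 2 : ℝ) : ℂ))/2,
      (((D 0 * a 0 + t 0 : ℝ) : ℂ) - ((D 1 * a 1 + t 1 : ℝ) : ℂ) * Complex.I)/2;
      (((D 0 * a 0 + t 0 : ℝ) : ℂ) + ((D 1 * a 1 + t 1 : ℝ) : ℂ) * Complex.I)/2,
      (1 - ((D 2 * a 2 + t 2 : ℝ) : ℂ))/2] := by
    ext i j
    fin_cases i <;> fin_cases j <;>
      simp [hρ, normalForm, pauliXYZ, pauli, Fin.sum_univ_three, Matrix.trace_fin_two,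
        Matrix.mul_apply, Fin.sum_univ_two, hx, hy, hz] <;>
      push_cast <;> ring_nf <;>
      first
        | rfl
        | (rw [show Complex.I ^ 3 = -Complex.I by rw [pow_succ, Complex.I_sq]; ring]; ring)
        | ring
  have hdet := psd_det_nonneg' hN
  rw [hNmat, Matrix.det_fin_two_of] at hdet
  have hdeq : ((1 + ((D 2 * a 2 + t 2 : ℝ) : ℂ))/2 * ((1 - ((D 2 * a 2 + t 2 : ℝ) : ℂ))/2) -
      (((D 0 * a 0 + t 0 : ℝ) : ℂ) - ((D 1 * a 1 + t 1 : ℝ) : ℂ) * Complex.I)/2 *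
        ((((D 0 * a 0 + t 0 : ℝ) : ℂ) + ((D 1 * a 1 + t 1 : ℝ) : ℂ) * Complex.I)/2))
      = (((1 - ((D 0 * a 0 + t 0) ^ 2 + (D 1 * a 1 + t 1) ^ 2 + (D 2 * a 2 + t 2) ^ 2))/4
          : ℝ) : ℂ) := by
    push_cast
    linear_combination ((((D 1 : ℝ) : ℂ) * ((a 1 : ℝ) : ℂ) + ((t 1 : ℝ) : ℂ)) ^ 2 / 4) * Complex.I_sq
  rw [hdeq, Complex.zero_le_real] at hdet
  rw [Fin.sum_univ_three]
  linarith

set_option maxHeartbeats 1000000 in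
/-- Constraint on normal-form parameters: if the normal-form map `N'`
with parameters `(D, t)` (entries of `D` all of the same sign) maps density matrices to
density matrices, then `Υ(D,t) ≤ 1`; and the inequality is strict whenever
`0 < max(D_X², D_Y², D_Z²) < 1` or `0 < t_X² + t_Y² + t_Z² < 1`. -/
theorem stmt_0 (D t : Fin 3 → ℝ)
    (hsign : (∀ i, 0 ≤ D i) ∨ (∀ i, D i ≤ 0))
    (hchan : ∀ ρ : QMat, ρ.PosSemidef → Matrix.trace ρ = 1 →
      (normalForm D t ρ).PosSemidef ∧ Matrix.trace (normalForm D t ρ) = 1) :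
    Upsilon D t ≤ 1 ∧
      ((((∃ i, 0 < D i ^ 2) ∧ ∀ i, D i ^ 2 < 1) ∨
          (0 < ∑ i, t i ^ 2 ∧ (∑ i, t i ^ 2) < 1)) →
        Upsilon D t < 1) := by
  have key := keyA' D t hchan
  -- averaged constraint
  have hqc : ∀ a : Fin 3 → ℝ, (∑ i, a i ^ 2) = 1 →
      (∑ i, a i ^ 2 * D i ^ 2) + (∑ i, t i ^ 2) ≤ 1 := by
    intro a ha
    have h1 := key a ha
    have h2 := key (fun i => -a i) (by simpa using ha)
    simp only [Fin.sum_univ_three] at h1 h2 ⊢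
    nlinarith [h1, h2]
  -- Cauchy-Schwarz
  have hcs : ∀ a : Fin 3 → ℝ, (∑ i, a i ^ 2) = 1 →
      (∑ i, a i * t i) ^ 2 ≤ ∑ i, t i ^ 2 := by
    intro a ha
    simp only [Fin.sum_univ_three] at ha ⊢
    nlinarith [sq_nonneg (a 0 * t 1 - a 1 * t 0), sq_nonneg (a 0 * t 2 - a 2 * t 0),
      sq_nonneg (a 1 * t 2 - a 2 * t 1), ha]
  have hle : ∀ a : Fin 3 → ℝ, (∑ i, a i ^ 2) = 1 →
      (∑ i, a i ^ 2 * D i ^ 2) + (∑ i, a i * t i) ^ 2 ≤ 1 := by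
    intro a ha
    have := hqc a ha
    have := hcs a ha
    linarith
  constructor
  · apply Real.sSup_le _ zero_le_one
    rintro r ⟨a, ha, rfl⟩
    exact hle a ha
  intro hcase
  -- the total shift is strictly less than 1
  have hc1 : (∑ i, t i ^ 2) < 1 := by
    rcases hcase with ⟨⟨i, hDi⟩, hDlt⟩ | ⟨hc0, hclt⟩
    · fin_cases i
      · have h := hqc ![1,0,0] (by simp [Fin.sum_univ_three])
        simp [Fin.sum_univ_three] at h hDi ⊢
        nlinarith
      · have h := hqc ![0,1,0] (by simp [Fin.sum_univ_three])
        simp [Fin.sum_univ_three] at h hDi ⊢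
        nlinarith
      · have h := hqc ![0,0,1] (by simp [Fin.sum_univ_three])
        simp [Fin.sum_univ_three] at h hDi ⊢
        nlinarith
    · exact hclt
  -- pointwise strict bound
  have hpt : ∀ a : Fin 3 → ℝ, (∑ i, a i ^ 2) = 1 →
      (∑ i, a i ^ 2 * D i ^ 2) + (∑ i, a i * t i) ^ 2 < 1 := by
    intro a ha
    have hqc' := hqc a ha
    have hcs' := hcs a ha
    rcases lt_or_eq_of_le hcs' with h | h
    · linarith
    · -- equality case in Cauchy-Schwarz : t = s • a
      simp only [Fin.sum_univ_three] at ha hqc' h ⊢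
      set s : ℝ := a 0 * t 0 + a 1 * t 1 + a 2 * t 2 with hs
      have hz : (t 0 - s * a 0) ^ 2 + (t 1 - s * a 1) ^ 2 + (t 2 - s * a 2) ^ 2 = 0 := by
        linear_combination -h - 2 * s * hs.symm + s ^ 2 * ha
      have hsub : ∀ u v : ℝ, (u - v) ^ 2 ≤ 0 → u = v := by
        intro u v huv
        have h2 : (u - v) ^ 2 = 0 := le_antisymm huv (sq_nonneg _)
        have h3 : u - v = 0 := by
          exact pow_eq_zero_iff (two_ne_zero) |>.mp h2
        linarith
      have ht0 : t 0 = s * a 0 := hsub _ _ (by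
        nlinarith [sq_nonneg (t 1 - s * a 1), sq_nonneg (t 2 - s * a 2)])
      have ht1 : t 1 = s * a 1 := hsub _ _ (by
        nlinarith [sq_nonneg (t 0 - s * a 0), sq_nonneg (t 2 - s * a 2)])
      have ht2 : t 2 = s * a 2 := hsub _ _ (by
        nlinarith [sq_nonneg (t 0 - s * a 0), sq_nonneg (t 1 - s * a 1)])
      by_cases hc : t 0 ^ 2 + t 1 ^ 2 + t 2 ^ 2 = 0
      · -- t = 0
        have hs0 : s = 0 := pow_eq_zero_iff two_ne_zero |>.mp (h.trans hc)
        rcases hcase with ⟨⟨i, hDi⟩, hDlt⟩ | ⟨hc0, _⟩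
        · have h0 := hDlt 0
          have h1 := hDlt 1
          have h2 := hDlt 2
          rw [hs0]
          have hm0 : D 0 ^ 2 ≤ max (D 0 ^ 2) (max (D 1 ^ 2) (D 2 ^ 2)) := le_max_left _ _
          have hm1 : D 1 ^ 2 ≤ max (D 0 ^ 2) (max (D 1 ^ 2) (D 2 ^ 2)) :=
            le_trans (le_max_left _ _) (le_max_right _ _)
          have hm2 : D 2 ^ 2 ≤ max (D 0 ^ 2) (max (D 1 ^ 2) (D 2 ^ 2)) :=
            le_trans (le_max_right _ _) (le_max_right _ _)
          have hmlt : max (D 0 ^ 2) (max (D 1 ^ 2) (D 2 ^ 2)) < 1 :=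
            max_lt h0 (max_lt h1 h2)
          nlinarith [mul_nonneg (sq_nonneg (a 0)) (sub_nonneg.2 hm0),
            mul_nonneg (sq_nonneg (a 1)) (sub_nonneg.2 hm1),
            mul_nonneg (sq_nonneg (a 2)) (sub_nonneg.2 hm2)]
        · simp only [Fin.sum_univ_three] at hc0
          linarith
      · -- ‖t‖ > 0 hence s ≠ 0
        have hcpos : 0 < t 0 ^ 2 + t 1 ^ 2 + t 2 ^ 2 :=
          lt_of_le_of_ne (by positivity) (Ne.symm hc)
        have hspos : s ≠ 0 := by
          intro h0
          rw [h0] at h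
          simp at h
          exact hc h.symm
        simp only [Fin.sum_univ_three] at hc1
        by_cases hr0 : D 0 * a 0 ^ 2 + D 1 * a 1 ^ 2 + D 2 * a 2 ^ 2 = 0
        · have hD : D 0 * a 0 ^ 2 = 0 ∧ D 1 * a 1 ^ 2 = 0 ∧ D 2 * a 2 ^ 2 = 0 := by
            rcases hsign with hp | hn
            · have p0 := mul_nonneg (hp 0) (sq_nonneg (a 0))
              have p1 := mul_nonneg (hp 1) (sq_nonneg (a 1))
              have p2 := mul_nonneg (hp 2) (sq_nonneg (a 2))
              exact ⟨by linarith, by linarith, by linarith⟩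
            · have p0 := mul_nonpos_of_nonpos_of_nonneg (hn 0) (sq_nonneg (a 0))
              have p1 := mul_nonpos_of_nonpos_of_nonneg (hn 1) (sq_nonneg (a 1))
              have p2 := mul_nonpos_of_nonpos_of_nonneg (hn 2) (sq_nonneg (a 2))
              exact ⟨by linarith, by linarith, by linarith⟩
          obtain ⟨e0, e1, e2⟩ := hD
          have hq0 : a 0 ^ 2 * D 0 ^ 2 + a 1 ^ 2 * D 1 ^ 2 + a 2 ^ 2 * D 2 ^ 2 = 0 := by
            linear_combination D 0 * e0 + D 1 * e1 + D 2 * e2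
          rw [hq0, h]
          linarith
        · have hk1 := key a (by simp only [Fin.sum_univ_three]; exact ha)
          have hk2 := key (fun i => -a i)
            (by simp only [Fin.sum_univ_three]; simpa using ha)
          simp only [Fin.sum_univ_three] at hk1 hk2
          rw [ht0, ht1, ht2] at hk1 hk2
          have id1 : (D 0 * a 0 + s * a 0) ^ 2 + (D 1 * a 1 + s * a 1) ^ 2 +
              (D 2 * a 2 + s * a 2) ^ 2 =
              (a 0 ^ 2 * D 0 ^ 2 + a 1 ^ 2 * D 1 ^ 2 + a 2 ^ 2 * D 2 ^ 2) +
              2 * s * (D 0 * a 0 ^ 2 + D 1 * a 1 ^ 2 + D 2 * a 2 ^ 2) + s ^ 2 := by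
            linear_combination s ^ 2 * ha
          have id2 : (D 0 * -a 0 + s * a 0) ^ 2 + (D 1 * -a 1 + s * a 1) ^ 2 +
              (D 2 * -a 2 + s * a 2) ^ 2 =
              (a 0 ^ 2 * D 0 ^ 2 + a 1 ^ 2 * D 1 ^ 2 + a 2 ^ 2 * D 2 ^ 2) -
              2 * s * (D 0 * a 0 ^ 2 + D 1 * a 1 ^ 2 + D 2 * a 2 ^ 2) + s ^ 2 := by
            linear_combination s ^ 2 * ha
          rw [id1] at hk1
          rw [id2] at hk2
          have hsr : s * (D 0 * a 0 ^ 2 + D 1 * a 1 ^ 2 + D 2 * a 2 ^ 2) ≠ 0 :=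
            mul_ne_zero hspos hr0
          rcases lt_trichotomy (s * (D 0 * a 0 ^ 2 + D 1 * a 1 ^ 2 + D 2 * a 2 ^ 2)) 0 with
            hlt | heq | hgt
          · nlinarith [hk2]
          · exact absurd heq hsr
          · nlinarith [hk1]
  -- compactness: the supremum is attained
  have hcont : Continuous fun a : Fin 3 → ℝ =>
      (∑ i, a i ^ 2 * D i ^ 2) + (∑ i, a i * t i) ^ 2 := by
    simp only [Fin.sum_univ_three]
    fun_prop
  have hcont2 : Continuous fun a : Fin 3 → ℝ => (∑ i, a i ^ 2) := by
    simp only [Fin.sum_univ_three]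
    fun_prop
  set S : Set (Fin 3 → ℝ) := {a | (∑ i, a i ^ 2) = 1} with hS
  have hSclosed : IsClosed S := by
    have : S = (fun a : Fin 3 → ℝ => (∑ i, a i ^ 2)) ⁻¹' {1} := rfl
    rw [this]
    exact isClosed_singleton.preimage hcont2
  have hSbdd : Bornology.IsBounded S := by
    rw [isBounded_iff_forall_norm_le]
    refine ⟨1, fun a haS => ?_⟩
    rw [pi_norm_le_iff_of_nonneg zero_le_one]
    intro i
    have haS' : (∑ j, a j ^ 2) = 1 := haS
    have h3 : a i ^ 2 ≤ 1 := by
      calc a i ^ 2 ≤ ∑ j, a j ^ 2 :=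
            Finset.single_le_sum (fun j _ => sq_nonneg (a j)) (Finset.mem_univ i)
        _ = 1 := haS'
    rw [Real.norm_eq_abs, abs_le]
    constructor <;> nlinarith [sq_nonneg (a i + 1), sq_nonneg (a i - 1)]
  have hK : IsCompact S := Metric.isCompact_of_isClosed_isBounded hSclosed hSbdd
  have hne : S.Nonempty := ⟨![1, 0, 0], by simp [hS, Fin.sum_univ_three]⟩
  obtain ⟨a₀, ha₀S, hmax'⟩ := hK.exists_isMaxOn hne hcont.continuousOn
  have hmax : ∀ a ∈ S, (∑ i, a i ^ 2 * D i ^ 2) + (∑ i, a i * t i) ^ 2 ≤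
      (∑ i, a₀ i ^ 2 * D i ^ 2) + (∑ i, a₀ i * t i) ^ 2 := fun a haa => hmax' haa
  have ha₀ : (∑ i, a₀ i ^ 2) = 1 := ha₀S
  have hub : Upsilon D t ≤ (∑ i, a₀ i ^ 2 * D i ^ 2) + (∑ i, a₀ i * t i) ^ 2 := by
    apply Real.sSup_le
    · rintro r ⟨a, ha, rfl⟩
      exact hmax a ha
    · positivity
  exact lt_of_le_of_lt hub (hpt a₀ ha₀)

end
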